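/- Let S be a commutative ring with an ideal n and with 4S = 0. Let m be a positive integer, let C = ⟨u | u^(2^m) = 1⟩ be the cyclic group of order 2^m, and set U = u − 1 in the group algebra SC. Then for each non-negative integer k, Δ(SC : n)^k = ⨁_{0 ≤ i < 2^(m−1)} n^(k−i)·U^i ⊕ ⨁_{2^(m−1) ≤ i < 2^m} (n^(k−i) + 2·n^(k−i−2^(m−1)))·U^i, where by convention n^j = S for j ≤ 0, and the U^i (0 ≤ i < 2^m) form an S-module basis of SC realizing the direct sum. -/

import Mathlib

/-- The augmentation map `ε : SG → S`, sending `Σ α_g g` to `Σ α_g`. -/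
noncomputable def aug (S : Type) [CommRing S] (G : Type) [Group G] :
    MonoidAlgebra S G →ₐ[S] S := MonoidAlgebra.lift S S G 1

/-- The relative augmentation ideal `Δ(SG : n) = ε⁻¹(n) = {x ∈ SG : ε(x) ∈ n}`. -/
noncomputable def relAugIdeal (S : Type) [CommRing S] (nn : Ideal S) (G : Type) [Group G] :
    Ideal (MonoidAlgebra S G) := Ideal.comap (aug S G) nn

/-- The element `U = u - 1` of `SC` where `u` generates the cyclic group `C` of
order `2^m` (realized as `Multiplicative (ZMod (2^m))`). -/
noncomputable def Ucyc (S : Type) [CommRing S] (m : ℕ) :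
    MonoidAlgebra S (Multiplicative (ZMod (2 ^ m))) :=
  MonoidAlgebra.of S (Multiplicative (ZMod (2 ^ m))) (Multiplicative.ofAdd 1) - 1


open MonoidAlgebra Polynomial

variable (S : Type) [CommRing S] (m : ℕ)

abbrev Cgrp (m : ℕ) := Multiplicative (ZMod (2 ^ m))

noncomputable def ugen : MonoidAlgebra S (Cgrp m) :=
  MonoidAlgebra.of S (Cgrp m) (Multiplicative.ofAdd 1)

lemma Ucyc_add_one : Ucyc S m + 1 = ugen S m := sub_add_cancel _ _

lemma of_eq_ugen_pow (g : Cgrp m) :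
    MonoidAlgebra.of S (Cgrp m) g = ugen S m ^ (g.toAdd).val := by
  haveI : NeZero (2 ^ m) := ⟨pow_ne_zero _ two_ne_zero⟩
  rw [ugen, ← map_pow]
  congr 1
  rw [← ofAdd_nsmul]
  simp [nsmul_eq_mul, ZMod.natCast_val, ZMod.cast_id]

lemma ugen_pow_card : ugen S m ^ (2 ^ m) = 1 := by
  haveI : NeZero (2 ^ m) := ⟨pow_ne_zero _ two_ne_zero⟩
  rw [ugen, ← map_pow, ← ofAdd_nsmul]
  have : (2 ^ m) • (1 : ZMod (2 ^ m)) = 0 := by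
    simp [nsmul_eq_mul]
  rw [this]
  exact map_one (MonoidAlgebra.of S (Cgrp m))

noncomputable def Pm : S[X] := (X + 1) ^ (2 ^ m) - 1

lemma XaddOne_natDegree_pow [Nontrivial S] :
    ((X + 1 : S[X]) ^ (2 ^ m)).natDegree = 2 ^ m := by
  have h := (monic_X_add_C (1 : S)).natDegree_pow (2 ^ m)
  rw [map_one] at h
  have h2 : (X + (1 : S[X])).natDegree = 1 := by
    simpa using natDegree_X_add_C (1 : S)
  rw [h, h2, mul_one]

lemma Pm_natDegree [Nontrivial S] : (Pm S m).natDegree = 2 ^ m := by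
  have h : (Pm S m) = (X + 1) ^ (2 ^ m) - C 1 := by simp [Pm]
  rw [h, natDegree_sub_C, XaddOne_natDegree_pow]

lemma Pm_monic [Nontrivial S] : (Pm S m).Monic := by
  have h1 : ((X + 1 : S[X]) ^ (2 ^ m)).Monic := by
    simpa using (monic_X_add_C (1 : S)).pow (2 ^ m)
  refine h1.sub_of_left ?_
  rw [degree_one]
  have h2 : 0 < ((X + 1 : S[X]) ^ (2 ^ m)).natDegree := by
    rw [XaddOne_natDegree_pow]; positivity
  exact natDegree_pos_iff_degree_pos.mp h2

lemma aeval_Ucyc : (Polynomial.aeval (Ucyc S m)) (Pm S m) = 0 := by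
  rw [Pm, map_sub, map_pow, map_add, map_one, aeval_X, Ucyc_add_one, ugen_pow_card,
    sub_self]

noncomputable def phi : AdjoinRoot (Pm S m) →ₐ[S] MonoidAlgebra S (Cgrp m) :=
  AdjoinRoot.liftAlgHom (Pm S m) (Algebra.ofId S _) (Ucyc S m) (aeval_Ucyc S m)

lemma phi_surjective : Function.Surjective (phi S m) := by
  intro x
  have key : x ∈ (phi S m).range := by
    refine MonoidAlgebra.induction_on x (fun g => ?_) (fun a b ha hb => add_mem ha hb)
      (fun s f hf => ?_)
    · rw [of_eq_ugen_pow]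
      refine pow_mem ?_ _
      rw [← Ucyc_add_one]
      refine add_mem ⟨AdjoinRoot.root (Pm S m), ?_⟩ (one_mem _)
      exact AdjoinRoot.liftAlgHom_root _ _ _ _
    · exact Subalgebra.smul_mem _ hf s
  exact key

noncomputable def Rbasis [Nontrivial S] :
    Module.Basis (Fin (2 ^ m)) S (MonoidAlgebra S (Cgrp m)) := by
  have hfin : Module.Finite S (MonoidAlgebra S (Cgrp m)) :=
    Module.Finite.of_basis (MonoidAlgebra.basis (Cgrp m) S)
  have hbij : Function.Bijective (phi S m) := by
    have hsurj := phi_surjective S m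
    have hcard : Fintype.card (Cgrp m) = 2 ^ m := by
      haveI : NeZero (2 ^ m) := ⟨pow_ne_zero _ two_ne_zero⟩
      simp [ZMod.card]
    -- linear equiv between AdjoinRoot (Pm S m) and MonoidAlgebra S (Cgrp m)
    have e : AdjoinRoot (Pm S m) ≃ₗ[S] MonoidAlgebra S (Cgrp m) :=
      Module.Basis.equiv (AdjoinRoot.powerBasis' (Pm_monic S m)).basis
        (MonoidAlgebra.basis (Cgrp m) S)
        (by
          refine Fintype.equivOfCardEq ?_
          rw [Fintype.card_fin, hcard, AdjoinRoot.powerBasis'_dim]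
          exact Pm_natDegree S m)
    have hendo : Function.Surjective ((phi S m).toLinearMap ∘ₗ (e.symm.toLinearMap)) :=
      hsurj.comp e.symm.surjective
    have hinj := OrzechProperty.injective_of_surjective_endomorphism _ hendo
    have : Function.Injective (phi S m) := by
      have : Function.Injective
          (((phi S m).toLinearMap ∘ₗ e.symm.toLinearMap).comp e.toLinearMap) :=
        hinj.comp e.injective
      simpa using this
    exact ⟨this, hsurj⟩
  exact ((AdjoinRoot.powerBasis' (Pm_monic S m)).basis.map
      (AlgEquiv.ofBijective (phi S m) hbij).toLinearEquiv).reindex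
    (finCongr (by rw [AdjoinRoot.powerBasis'_dim]; exact Pm_natDegree S m))

lemma Rbasis_apply [Nontrivial S] (i : Fin (2 ^ m)) :
    Rbasis S m i = Ucyc S m ^ (i : ℕ) := by
  rw [Rbasis, Module.Basis.reindex_apply, Module.Basis.map_apply]
  have h1 : ∀ j : Fin (AdjoinRoot.powerBasis' (Pm_monic S m)).dim,
      (AdjoinRoot.powerBasis' (Pm_monic S m)).basis j
        = AdjoinRoot.root (Pm S m) ^ (j : ℕ) := fun j => by
    conv_rhs => rw [← AdjoinRoot.powerBasis'_gen (Pm_monic S m)]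
    rw [(AdjoinRoot.powerBasis' (Pm_monic S m)).coe_basis]
  rw [h1]
  simp only [AlgEquiv.toLinearEquiv_apply, map_pow, finCongr_symm_apply, Fin.coe_cast]
  congr 1
  exact AdjoinRoot.liftAlgHom_root (Pm S m) (Algebra.ofId S _) (Ucyc S m) (aeval_Ucyc S m)

lemma Ucyc_linearIndependent [Nontrivial S] :
    LinearIndependent S (fun i : Fin (2 ^ m) => Ucyc S m ^ (i : ℕ)) := by
  have h := (Rbasis S m).linearIndependent
  rwa [show ⇑(Rbasis S m) = fun i : Fin (2 ^ m) => Ucyc S m ^ (i : ℕ) from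
    funext fun i => Rbasis_apply S m i] at h

lemma Ucyc_span [Nontrivial S] :
    Submodule.span S (Set.range fun i : Fin (2 ^ m) => Ucyc S m ^ (i : ℕ)) = ⊤ := by
  have h := (Rbasis S m).span_eq
  rwa [show Set.range ⇑(Rbasis S m) = Set.range fun i : Fin (2 ^ m) => Ucyc S m ^ (i : ℕ) from
    congrArg _ (funext fun i => Rbasis_apply S m i)] at h

lemma pow2m_expand' {A : Type*} [CommRing A] (h4 : (4:A) = 0) (x : A) :
    ∀ m : ℕ, 0 < m → (x+1)^(2^m) = x^(2^m) + 2*x^(2^(m-1)) + 1 := by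
  intro m
  induction m with
  | zero => intro h; exact absurd h (by norm_num)
  | succ m ih =>
    intro _
    rcases Nat.eq_zero_or_pos m with rfl | hm
    · norm_num; ring
    have h1 : 2^(m+1) = 2^m * 2 := by rw [pow_succ]
    have h2 : 2^m = 2^(m-1) * 2 := by
      conv_lhs => rw [← Nat.succ_pred_eq_of_pos hm, pow_succ]
      rfl
    rw [h1, pow_mul, pow_mul, ih hm, Nat.add_sub_cancel, h2, pow_mul]
    linear_combination (x^(2^(m-1)*3) + x^(2^(m-1)*2) + x^(2^(m-1))) * h4

section
variable (h4 : (4 : S) = 0) (hm : 0 < m)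

lemma four_R (h4 : (4 : S) = 0) : (4 : MonoidAlgebra S (Cgrp m)) = 0 := by
  have : (4 : MonoidAlgebra S (Cgrp m)) = algebraMap S _ (4 : S) := by
    rw [map_ofNat]
  rw [this, h4, map_zero]

lemma Ucyc_pow_N (h4 : (4 : S) = 0) (hm : 0 < m) :
    Ucyc S m ^ (2 ^ m) = 2 * Ucyc S m ^ (2 ^ (m-1)) := by
  have h := pow2m_expand' (four_R S m h4) (Ucyc S m) m hm
  rw [Ucyc_add_one, ugen_pow_card] at h
  have h2 : Ucyc S m ^ 2 ^ m + 2 * Ucyc S m ^ 2 ^ (m - 1) = 0 := by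
    linear_combination -h
  have h3 := four_R S m h4
  linear_combination h2 - Ucyc S m ^ 2 ^ (m-1) * h3

end

lemma two_mul_Ucyc_pow (h4 : (4 : S) = 0) (hm : 0 < m) {i : ℕ} (hi : 2 ^ (m-1) ≤ i) :
    2 * Ucyc S m ^ i = Ucyc S m ^ (i + 2 ^ (m-1)) := by
  have hsplit : i = 2 ^ (m-1) + (i - 2 ^ (m-1)) := by omega
  have hNH : 2 ^ m = 2 ^ (m-1) + 2 ^ (m-1) := by
    conv_lhs => rw [← Nat.succ_pred_eq_of_pos hm, pow_succ]
    rw [Nat.pred_eq_sub_one]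
    omega
  calc 2 * Ucyc S m ^ i
      = (2 * Ucyc S m ^ (2 ^ (m-1))) * Ucyc S m ^ (i - 2 ^ (m-1)) := by
        conv_lhs => rw [hsplit, pow_add]
        ring
    _ = Ucyc S m ^ (2 ^ m) * Ucyc S m ^ (i - 2 ^ (m-1)) := by
        rw [← Ucyc_pow_N S m h4 hm]
    _ = Ucyc S m ^ (i + 2 ^ (m-1)) := by
        rw [← pow_add]
        congr 1
        omega

lemma Ucyc_pow_zero (h4 : (4 : S) = 0) (hm : 0 < m) {s : ℕ}
    (hs : 2 ^ m + 2 ^ (m-1) ≤ s) : Ucyc S m ^ s = 0 := by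
  have h1 : Ucyc S m ^ (2 ^ m + 2 ^ (m-1)) = 0 := by
    have h2 : 2 * Ucyc S m ^ (2 ^ m) = Ucyc S m ^ (2 ^ m + 2 ^ (m-1)) :=
      two_mul_Ucyc_pow S m h4 hm (by
        have := Nat.one_le_two_pow (n := m - 1)
        calc 2 ^ (m-1) ≤ 2 ^ m := Nat.pow_le_pow_right (by norm_num) (by omega)
          _ ≤ 2 ^ m := le_refl _)
    rw [← h2, Ucyc_pow_N S m h4 hm, ← mul_assoc]
    have : (2 : MonoidAlgebra S (Cgrp m)) * 2 = 4 := by norm_num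
    rw [this, four_R S m h4, zero_mul]
  calc Ucyc S m ^ s = Ucyc S m ^ (2 ^ m + 2 ^ (m-1)) * Ucyc S m ^ (s - (2 ^ m + 2 ^ (m-1))) := by
        rw [← pow_add]; congr 1; omega
    _ = 0 := by rw [h1, zero_mul]

lemma aug_of {G : Type} [Group G] (g : G) :
    aug S G (MonoidAlgebra.of S G g) = 1 := by
  simp [aug]

lemma relAug_eq (nn : Ideal S) :
    relAugIdeal S nn (Cgrp m)
      = Ideal.map (algebraMap S (MonoidAlgebra S (Cgrp m))) nn ⊔ Ideal.span {Ucyc S m} := by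
  apply le_antisymm
  · intro x hx
    have hker : x - algebraMap S _ (aug S (Cgrp m) x) ∈ Ideal.span {Ucyc S m} := by
      refine MonoidAlgebra.induction_on
        (motive := fun y => y - algebraMap S _ (aug S (Cgrp m) y) ∈ Ideal.span {Ucyc S m})
        x (fun g => ?_) (fun a b ha hb => ?_) (fun s f hf => ?_)
      · rw [aug_of, map_one]
        rw [of_eq_ugen_pow, ← Ucyc_add_one]
        have : (Ucyc S m + 1) ^ (Multiplicative.toAdd g).val - 1
            = (Ucyc S m + 1) ^ (Multiplicative.toAdd g).val - 1 ^ (Multiplicative.toAdd g).val := by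
          rw [one_pow]
        rw [this]
        exact Ideal.mem_span_singleton.mpr (by
          simpa using sub_dvd_pow_sub_pow (Ucyc S m + 1) 1 (Multiplicative.toAdd g).val)
      · rw [map_add, map_add]
        have : a + b - (algebraMap S _ (aug S (Cgrp m) a) + algebraMap S _ (aug S (Cgrp m) b))
            = (a - algebraMap S _ (aug S (Cgrp m) a)) + (b - algebraMap S _ (aug S (Cgrp m) b)) := by
          ring
        rw [this]
        exact add_mem ha hb
      · rw [map_smul, smul_eq_mul, map_mul, Algebra.smul_def]
        have : algebraMap S _ s * f - algebraMap S _ s * algebraMap S _ (aug S (Cgrp m) f)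
            = algebraMap S _ s * (f - algebraMap S _ (aug S (Cgrp m) f)) := by ring
        rw [this]
        exact Ideal.mul_mem_left _ _ hf
    have hmem : algebraMap S _ (aug S (Cgrp m) x)
        ∈ Ideal.map (algebraMap S (MonoidAlgebra S (Cgrp m))) nn :=
      Ideal.mem_map_of_mem _ hx
    have : x = algebraMap S _ (aug S (Cgrp m) x) + (x - algebraMap S _ (aug S (Cgrp m) x)) := by
      ring
    rw [this]
    exact Submodule.add_mem_sup hmem hker
  · refine sup_le ?_ ?_
    · rw [Ideal.map_le_iff_le_comap]
      intro b hb
      simp only [Ideal.mem_comap, relAugIdeal, aug]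
      simpa using hb
    · rw [Ideal.span_le, Set.singleton_subset_iff]
      show Ucyc S m ∈ relAugIdeal S nn (Cgrp m)
      simp only [relAugIdeal, Ideal.mem_comap, Ucyc, map_sub, map_one]
      rw [show (aug S (Cgrp m)) (MonoidAlgebra.of S (Cgrp m) (Multiplicative.ofAdd 1)) = 1
        from aug_of S _]
      simp

lemma submodule_sum_eq_sup {R M ι : Type*} [Semiring R] [AddCommMonoid M] [Module R M]
    (s : Finset ι) (f : ι → Submodule R M) : s.sum f = s.sup f := by
  classical
  induction s using Finset.induction_on with
  | empty => simp
  | insert _ _ h ih => rw [Finset.sum_insert h, Finset.sup_insert, ih, ← Submodule.add_eq_sup]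

lemma ideal_sup_pow {R : Type*} [CommSemiring R] (A B : Ideal R) (k : ℕ) :
    (A ⊔ B) ^ k = ∑ j ∈ Finset.range (k+1), A ^ (k - j) * B ^ j := by
  apply le_antisymm
  · rw [← Ideal.add_eq_sup, add_pow, submodule_sum_eq_sup]
    refine Finset.sup_le fun j hj => ?_
    have hjk : j ≤ k := by
      simpa using Nat.lt_succ_iff.mp (Finset.mem_range.mp hj)
    calc A ^ j * B ^ (k - j) * (k.choose j : Ideal R)
        ≤ A ^ j * B ^ (k - j) := Ideal.mul_le_left
      _ = A ^ (k - (k - j)) * B ^ (k - j) := by rw [Nat.sub_sub_self hjk]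
      _ ≤ ∑ j' ∈ Finset.range (k+1), A ^ (k - j') * B ^ j' := by
          rw [submodule_sum_eq_sup]
          exact Finset.le_sup (f := fun j' => A ^ (k - j') * B ^ j')
            (Finset.mem_range.mpr (by omega : k - j < k + 1))
  · rw [submodule_sum_eq_sup]
    refine Finset.sup_le fun j hj => ?_
    have hjk : j ≤ k := Nat.lt_succ_iff.mp (Finset.mem_range.mp hj)
    calc A ^ (k - j) * B ^ j ≤ (A ⊔ B) ^ (k - j) * (A ⊔ B) ^ j :=
          Ideal.mul_mono (Ideal.pow_right_mono le_sup_left _)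
            (Ideal.pow_right_mono le_sup_right _)
      _ = (A ⊔ B) ^ k := by rw [← pow_add]; congr 1; omega

lemma restrictScalars_sum {R A ι : Type*} [CommSemiring R] [CommSemiring A] [Algebra R A]
    (s : Finset ι) (f : ι → Ideal A) :
    Submodule.restrictScalars R (s.sum f) = ∑ j ∈ s, Submodule.restrictScalars R (f j) := by
  classical
  induction s using Finset.induction_on with
  | empty => simp
  | insert _ _ h ih =>
    rw [Finset.sum_insert h, Finset.sum_insert h, ← ih]
    ext x
    simp only [Submodule.add_eq_sup, Submodule.mem_sup, Submodule.restrictScalars_mem]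

theorem stmt11 (S : Type) [CommRing S] (h4 : (4 : S) = 0) (nn : Ideal S)
    (m : ℕ) (hm : 0 < m) (k : ℕ) :
    (Submodule.restrictScalars S (relAugIdeal S nn (Multiplicative (ZMod (2 ^ m))) ^ k)
      = ∑ i ∈ Finset.range (2 ^ m),
          (if i < 2 ^ (m - 1) then nn ^ (k - i)
            else nn ^ (k - i) + Ideal.span {(2 : S)} * nn ^ (k - i - 2 ^ (m - 1)))
            • Submodule.span S {Ucyc S m ^ i})
    ∧ LinearIndependent S (fun i : Fin (2 ^ m) => Ucyc S m ^ (i : ℕ)) := by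
  rcases subsingleton_or_nontrivial S with hS | hS
  · constructor
    · apply le_antisymm <;> intro x _ <;>
        · have : x = 0 := Subsingleton.elim x 0
          rw [this]
          exact zero_mem _
    · exact linearIndependent_iff.mpr fun l _ => Subsingleton.elim l 0
  have hH : 0 < 2 ^ (m-1) := Nat.pow_pos (by norm_num)
  have hNH : 2 ^ m = 2 ^ (m-1) + 2 ^ (m-1) := by
    conv_lhs => rw [← Nat.succ_pred_eq_of_pos hm, pow_succ]
    rw [Nat.pred_eq_sub_one]
    omega
  set U := Ucyc S m with hU
  set M := ∑ i ∈ Finset.range (2 ^ m),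
      (if i < 2 ^ (m - 1) then nn ^ (k - i)
        else nn ^ (k - i) + Ideal.span {(2 : S)} * nn ^ (k - i - 2 ^ (m - 1)))
        • Submodule.span S {U ^ i} with hM
  refine ⟨?_, Ucyc_linearIndependent S m⟩
  -- term-to-sum inclusion helper
  have hterm : ∀ i < 2 ^ m,
      (if i < 2 ^ (m - 1) then nn ^ (k - i)
        else nn ^ (k - i) + Ideal.span {(2 : S)} * nn ^ (k - i - 2 ^ (m - 1)))
        • Submodule.span S {U ^ i} ≤ M := by
    intro i hi
    rw [hM, submodule_sum_eq_sup]
    exact Finset.le_sup (f := fun i => (if i < 2 ^ (m - 1) then nn ^ (k - i)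
      else nn ^ (k - i) + Ideal.span {(2 : S)} * nn ^ (k - i - 2 ^ (m - 1)))
        • Submodule.span S {U ^ i}) (Finset.mem_range.mpr hi)
  -- core membership for ⊇ direction
  have hΔ := relAug_eq S m nn
  have core : ∀ (a : S) (c j : ℕ), a ∈ nn ^ c → k ≤ c + j →
      a • U ^ j ∈ relAugIdeal S nn (Cgrp m) ^ k := by
    intro a c j ha hk
    have h1 : algebraMap S (MonoidAlgebra S (Cgrp m)) a
        ∈ Ideal.map (algebraMap S (MonoidAlgebra S (Cgrp m))) (nn ^ c) :=
      Ideal.mem_map_of_mem _ ha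
    have h2 : U ^ j ∈ Ideal.span {U} ^ j := by
      rw [Ideal.span_singleton_pow]
      exact Ideal.subset_span rfl
    have h3 : algebraMap S (MonoidAlgebra S (Cgrp m)) a * U ^ j
        ∈ Ideal.map (algebraMap S (MonoidAlgebra S (Cgrp m))) (nn ^ c) * Ideal.span {U} ^ j :=
      Ideal.mul_mem_mul h1 h2
    have h4' : Ideal.map (algebraMap S (MonoidAlgebra S (Cgrp m))) (nn ^ c) * Ideal.span {U} ^ j
        ≤ relAugIdeal S nn (Cgrp m) ^ k := by
      calc Ideal.map (algebraMap S (MonoidAlgebra S (Cgrp m))) (nn ^ c) * Ideal.span {U} ^ j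
          ≤ relAugIdeal S nn (Cgrp m) ^ c * relAugIdeal S nn (Cgrp m) ^ j := by
            refine Ideal.mul_mono ?_ (Ideal.pow_right_mono (hΔ ▸ le_sup_right) j)
            rw [Ideal.map_pow]
            exact Ideal.pow_right_mono (hΔ ▸ le_sup_left) c
        _ = relAugIdeal S nn (Cgrp m) ^ (c + j) := by rw [← pow_add]
        _ ≤ relAugIdeal S nn (Cgrp m) ^ k := Ideal.pow_le_pow_right hk
    rw [Algebra.smul_def]
    exact h4' h3
  -- membership in M for ⊆ direction
  have memM : ∀ (a : S) (j s : ℕ), a ∈ nn ^ (k - j) → j ≤ s → a • U ^ s ∈ M := by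
    intro a j s ha hjs
    rcases lt_or_ge s (2 ^ m) with hsN | hsN
    · -- direct basis term
      have haI : a ∈ (if s < 2 ^ (m - 1) then nn ^ (k - s)
          else nn ^ (k - s) + Ideal.span {(2 : S)} * nn ^ (k - s - 2 ^ (m - 1))) := by
        have hle : nn ^ (k - j) ≤ nn ^ (k - s) := Ideal.pow_le_pow_right (by omega)
        split_ifs
        · exact hle ha
        · rw [Submodule.add_eq_sup]
          exact Submodule.mem_sup_left (hle ha)
      exact hterm s hsN (Submodule.smul_mem_smul haI (Submodule.mem_span_singleton_self _))
    rcases lt_or_ge s (2 ^ m + 2 ^ (m-1)) with hsNH | hsNH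
    · -- folding term : U^s = 2 * U^(s - 2^(m-1))
      set i := s - 2 ^ (m-1) with hi
      have hiH : 2 ^ (m-1) ≤ i := by omega
      have hiN : i < 2 ^ m := by omega
      have hUs : U ^ s = 2 * U ^ i := by
        rw [two_mul_Ucyc_pow S m h4 hm hiH]
        congr 1
        omega
      have h2a : (2 : S) * a ∈ Ideal.span {(2:S)} * nn ^ (k - i - 2 ^ (m-1)) := by
        refine Ideal.mul_mem_mul (Ideal.subset_span rfl) ?_
        have hle : nn ^ (k - j) ≤ nn ^ (k - i - 2 ^ (m-1)) :=
          Ideal.pow_le_pow_right (by omega)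
        exact hle ha
      have haI : (2 : S) * a ∈ (if i < 2 ^ (m - 1) then nn ^ (k - i)
          else nn ^ (k - i) + Ideal.span {(2 : S)} * nn ^ (k - i - 2 ^ (m - 1))) := by
        rw [if_neg (by omega), Submodule.add_eq_sup]
        exact Submodule.mem_sup_right h2a
      have heq : a • U ^ s = ((2:S) * a) • U ^ i := by
        rw [hUs]
        have h2S : (2 : MonoidAlgebra S (Cgrp m)) = algebraMap S _ (2 : S) := by
          rw [map_ofNat]
        rw [h2S, ← Algebra.smul_def, smul_comm, smul_smul]
      rw [heq]
      exact hterm i hiN (Submodule.smul_mem_smul haI (Submodule.mem_span_singleton_self _))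
    · have : U ^ s = 0 := Ucyc_pow_zero S m h4 hm hsNH
      rw [this, smul_zero]
      exact zero_mem _
  apply le_antisymm
  · -- ⊆
    have hΔk : relAugIdeal S nn (Cgrp m) ^ k
        = ∑ j ∈ Finset.range (k+1),
            Ideal.map (algebraMap S (MonoidAlgebra S (Cgrp m))) (nn ^ (k - j))
              * Ideal.span {U ^ j} := by
      rw [hΔ, ideal_sup_pow]
      refine Finset.sum_congr rfl fun j _ => ?_
      rw [Ideal.map_pow, Ideal.span_singleton_pow]
    rw [hΔk, restrictScalars_sum, submodule_sum_eq_sup]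
    refine Finset.sup_le fun j _ => ?_
    have hrs : Submodule.restrictScalars S
        (Ideal.map (algebraMap S (MonoidAlgebra S (Cgrp m))) (nn ^ (k - j))
          * Ideal.span {U ^ j})
        = (nn ^ (k - j)) • Submodule.restrictScalars S (Ideal.span {U ^ j}) := by
      rw [← Ideal.smul_eq_mul]
      exact Ideal.smul_restrictScalars (nn ^ (k - j)) (Ideal.span {U ^ j})
    rw [hrs]
    refine Submodule.smul_le.mpr fun a ha x hx => ?_
    obtain ⟨r, rfl⟩ := Ideal.mem_span_singleton.mp hx
    refine MonoidAlgebra.induction_on (motive := fun r => a • (U ^ j * r) ∈ M) r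
      (fun g => ?_) (fun r1 r2 h1 h2 => ?_) (fun s r' hr' => ?_)
    · rw [of_eq_ugen_pow, ← Ucyc_add_one]
      set t := (Multiplicative.toAdd g).val with ht
      have hexp : (U + 1) ^ t = ∑ l ∈ Finset.range (t+1), t.choose l • U ^ l := by
        rw [add_pow]
        refine Finset.sum_congr rfl fun l _ => ?_
        rw [one_pow, mul_one, nsmul_eq_mul, mul_comm]
      rw [hexp, Finset.mul_sum, Finset.smul_sum]
      refine Submodule.sum_mem _ fun l _ => ?_
      have : U ^ j * t.choose l • U ^ l = t.choose l • U ^ (j + l) := by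
        rw [mul_smul_comm, ← pow_add]
      rw [this, smul_comm]
      exact nsmul_mem (memM a j (j + l) ha (by omega)) _
    · rw [mul_add, smul_add]
      exact add_mem h1 h2
    · rw [mul_smul_comm, smul_comm]
      exact Submodule.smul_mem _ _ hr'
  · -- ⊇
    rw [hM, submodule_sum_eq_sup]
    refine Finset.sup_le fun i hi => ?_
    refine Submodule.smul_le.mpr fun b hb x hx => ?_
    obtain ⟨c, rfl⟩ := Submodule.mem_span_singleton.mp hx
    rw [smul_comm, smul_smul]
    show (c * b) • U ^ i ∈ relAugIdeal S nn (Cgrp m) ^ k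
    have hb' : c * b ∈ (if i < 2 ^ (m - 1) then nn ^ (k - i)
        else nn ^ (k - i) + Ideal.span {(2 : S)} * nn ^ (k - i - 2 ^ (m - 1))) :=
      Ideal.mul_mem_left _ c hb
    clear hb
    split_ifs at hb' with hiH
    · exact core (c * b) (k - i) i hb' (by omega)
    · rw [Submodule.add_eq_sup] at hb'
      obtain ⟨b1, hb1, b2, hb2, heqb⟩ := Submodule.mem_sup.mp hb'
      rw [← heqb, add_smul]
      refine add_mem (core b1 (k - i) i hb1 (by omega)) ?_
      obtain ⟨z, hz, hzeq⟩ := Ideal.mem_span_singleton_mul.mp hb2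
      have heq : b2 • U ^ i = z • U ^ (i + 2 ^ (m-1)) := by
        rw [← two_mul_Ucyc_pow S m h4 hm (by omega)]
        rw [← hzeq]
        have h2S : (2 : MonoidAlgebra S (Cgrp m)) = algebraMap S _ (2 : S) := by
          rw [map_ofNat]
        rw [h2S, ← Algebra.smul_def, smul_comm, smul_smul, mul_comm]
      rw [heq]
      exact core z (k - i - 2 ^ (m-1)) (i + 2 ^ (m-1)) hz (by omega)
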